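/- Let n be a positive integer and let p, q be coprime integers with q ≥ 1 and p > n·q (i.e., p/q > n). Then there exist a natural number k and a finite sequence of integer pairs (a_0, b_0), (a_1, b_1), …, (a_k, b_k) such that (a_0, b_0) = (n, 1), (a_k, b_k) = (p, q), b_i ≥ 1 for every i, and a_{i+1}·b_i − a_i·b_{i+1} = 1 for every 0 ≤ i < k. (In particular each pair (a_i, b_i) is coprime and the slopes a_i/b_i strictly increase from n to p/q along the sequence.) -/
import Mathlib

lemma farey_aux : ∀ m : ℕ, ∀ n p q : ℤ, 0 < n → Int.gcd p q = 1 → 1 ≤ q →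
    q ≤ (m : ℤ) → n * q < p →
    ∃ (k : ℕ) (a b : ℕ → ℤ),
      a 0 = n ∧ b 0 = 1 ∧ a k = p ∧ b k = q ∧
      (∀ i ≤ k, 1 ≤ b i) ∧
      (∀ i < k, a (i + 1) * b i - a i * b (i + 1) = 1) := by
  intro m
  induction m with
  | zero => intro n p q _ _ hq hqm _; omega
  | succ m ih =>
    intro n p q hn hcop hq hqm hpq
    rcases eq_or_lt_of_le hq with h1 | h2
    · -- q = 1
      subst h1
      refine ⟨(p - n).toNat, fun i => n + (i : ℤ), fun _ => 1, by simp, rfl, ?_, rfl,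
        fun i _ => le_refl 1, fun i _ => by push_cast; ring⟩
      simp only
      omega
    · -- q ≥ 2
      obtain ⟨u, v, huv⟩ := Int.isCoprime_iff_gcd_eq_one.mpr hcop
      set b := u % q with hbdef
      have hqpos : (0:ℤ) < q := by omega
      have hb0 : 0 ≤ b := Int.emod_nonneg u (by omega)
      have hbq : b < q := Int.emod_lt_of_pos u hqpos
      have hdvd : q ∣ p * b - 1 := by
        have h1 : p * u - 1 = -v * q := by linarith
        have : p * b - 1 = (p * u - 1) - q * (p * (u / q)) := by
          rw [hbdef, Int.emod_def]; ring
        rw [this, h1]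
        exact dvd_sub ⟨-v, by ring⟩ ⟨p * (u / q), rfl⟩
      have hb1 : 1 ≤ b := by
        rcases eq_or_lt_of_le hb0 with h | h
        · exfalso
          rw [← h] at hdvd
          simp at hdvd
          have := Int.le_of_dvd one_pos (dvd_neg.mp (by simpa using hdvd))
          omega
        · omega
      set a := (p * b - 1) / q with hadef
      have haq : a * q = p * b - 1 := Int.ediv_mul_cancel hdvd
      have hedge : p * b - a * q = 1 := by omega
      have hcopab : Int.gcd a b = 1 :=
        Int.isCoprime_iff_gcd_eq_one.mp ⟨-q, p, by linarith⟩
      have hnba : n * b ≤ a := by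
        have h3 : n * b * q ≤ a * q := by nlinarith
        exact le_of_mul_le_mul_right h3 hqpos
      rcases eq_or_lt_of_le hnba with heq | hlt
      · -- then b = 1 and a = n, single edge
        have hfac : b * (p - n * q) = 1 := by nlinarith
        have hb : b = 1 := by
          have h4 : 1 ≤ p - n * q := by nlinarith
          nlinarith
        refine ⟨1, fun i => if i = 0 then n else p, fun i => if i = 0 then 1 else q,
          by simp, by simp, by simp, by simp, ?_, ?_⟩
        · intro i _; by_cases h : i = 0 <;> simp [h]; omega
        · intro i hi
          have : i = 0 := by omega
          subst this
          simp
          have : a = n * b := heq.symm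
          nlinarith
      · -- recurse
        obtain ⟨k', A, B, hA0, hB0, hAk, hBk, hBpos, hE⟩ :=
          ih n a b hn hcopab hb1 (by omega) hlt
        refine ⟨k' + 1, fun i => if i ≤ k' then A i else p,
          fun i => if i ≤ k' then B i else q, by simp [hA0], by simp [hB0],
          by simp, by simp, ?_, ?_⟩
        · intro i _
          by_cases h : i ≤ k'
          · simpa [h] using hBpos i h
          · simp [h]; omega
        · intro i hi
          by_cases h : i < k'
          · have h1 : i ≤ k' := by omega
            have h2 : i + 1 ≤ k' := by omega
            simpa [h1, h2] using hE i h
          · have h1 : i = k' := by omega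
            subst h1
            simp [hAk, hBk]
            omega

/-- Existence of a monotone path of Farey-tessellation edges from the integer slope `n`
(represented by the pair `(n,1)`) to the rational slope `p/q` (with `gcd(p,q) = 1`,
`q ≥ 1` and `p/q > n`): there is a finite sequence of integer pairs `(a_i, b_i)`,
starting at `(n,1)` and ending at `(p,q)`, with all `b_i ≥ 1`, in which consecutive
pairs are Farey neighbors: `a_{i+1}·b_i − a_i·b_{i+1} = 1`. -/
theorem farey_path_from_integer_slope (n p q : ℤ) (hn : 0 < n)
    (hcop : Int.gcd p q = 1) (hq : 1 ≤ q) (hpq : n * q < p) :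
    ∃ (k : ℕ) (a b : ℕ → ℤ),
      a 0 = n ∧ b 0 = 1 ∧ a k = p ∧ b k = q ∧
      (∀ i ≤ k, 1 ≤ b i) ∧
      (∀ i < k, a (i + 1) * b i - a i * b (i + 1) = 1) := by
  exact farey_aux q.toNat n p q hn hcop hq (by omega) hpq
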